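/- Let x : ℤ → Σ be a bi-infinite recurrent sequence over a finite alphabet Σ (every finite factor that appears in x appears infinitely often, with bounded gaps not required). For every factor v of x of length N appearing at position s, and every positive integer q, there exists an integer t > 0 such that v appears again in x at position s + q·t; i.e., x(s+i) = x(s+qt+i) for all 0 ≤ i < N. -/

import Mathlib

/-- Recurrence lemma: in a recurrent bi-infinite sequence, every factor of
length `N` at position `s` reappears at a position `s + q*t` with `t > 0`. -/
theorem stmt_0 {A : Type*} [Fintype A] (x : ℤ → A)
    (hrec : ∀ (s : ℤ) (N : ℕ) (M : ℤ), ∃ p : ℤ, p > M ∧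
      ∀ i : ℕ, i < N → x (p + i) = x (s + i))
    (s : ℤ) (N : ℕ) (q : ℤ) (hq : 0 < q) :
    ∃ t : ℤ, 0 < t ∧ ∀ i : ℕ, i < N → x (s + i) = x (s + q * t + i) := by
  set D : ℤ → Prop := fun d => ∀ i : ℕ, i < N → x (s + d + (i : ℤ)) = x (s + (i : ℤ))
    with hD
  have main : ∀ k : ℕ, ∃ e : ℕ → ℤ, e 0 = 0 ∧
      (∀ i j, i < j → j ≤ k → e i < e j) ∧
      (∀ i j, i ≤ j → j ≤ k → D (e j - e i)) := by
    intro k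
    induction k with
    | zero =>
        refine ⟨fun _ => 0, rfl, ?_, ?_⟩
        · intro i j hij hj; omega
        · intro i j hij hj
          interval_cases j; interval_cases i
          simp [hD]
    | succ k ih =>
        obtain ⟨e, he0, hmono, hDd⟩ := ih
        have hnonneg : ∀ m, m ≤ k → 0 ≤ e m := by
          intro m hm
          rcases Nat.eq_zero_or_pos m with h | h
          · simp [h, he0]
          · have := hmono 0 m h hm; omega
        have hle : ∀ m, m ≤ k → e m ≤ e k := by
          intro m hm
          rcases eq_or_lt_of_le hm with h | h
          · simp [h]
          · exact le_of_lt (hmono m k h le_rfl)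
        obtain ⟨p, hp, hocc⟩ := hrec s (N + (e k).toNat) (s + e k)
        set t' := p - s with ht'
        have ht'pos : e k < t' := by omega
        have heknn : 0 ≤ e k := hnonneg k le_rfl
        have hshift : ∀ m, m ≤ k → D (t' + e m) := by
          intro m hm i hi
          have hm0 : 0 ≤ e m := hnonneg m hm
          have hj : (e m).toNat + i < N + (e k).toNat := by
            have := hle m hm; omega
          have h1 := hocc ((e m).toNat + i) hj
          have hcast : ((((e m).toNat + i : ℕ)) : ℤ) = e m + i := by
            push_cast; omega
          have h2 : x (p + (e m + i)) = x (s + (e m + i)) := by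
            rw [← hcast]; exact_mod_cast h1
          have h3 : x (s + e m + (i : ℤ)) = x (s + (i : ℤ)) := by
            have := hDd 0 m (Nat.zero_le m) hm
            simpa [he0] using this i hi
          calc x (s + (t' + e m) + (i : ℤ)) = x (p + (e m + i)) := by congr 1; rw [ht']; ring
            _ = x (s + (e m + i)) := h2
            _ = x (s + e m + (i : ℤ)) := by ring_nf
            _ = x (s + (i : ℤ)) := h3
        refine ⟨fun m => if m = 0 then 0 else t' + e (m - 1), rfl, ?_, ?_⟩
        · intro i j hij hj
          by_cases hi0 : i = 0
          · subst hi0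
            simp only [eq_self_iff_true, if_true, if_neg (by omega : j ≠ 0)]
            have := hnonneg (j - 1) (by omega)
            omega
          · simp only [if_neg hi0, if_neg (by omega : j ≠ 0)]
            have := hmono (i - 1) (j - 1) (by omega) (by omega)
            omega
        · intro i j hij hj
          rcases eq_or_lt_of_le hij with h | h
          · subst h; simp [hD]
          · by_cases hi0 : i = 0
            · subst hi0
              simp only [eq_self_iff_true, if_true, if_neg (by omega : j ≠ 0), sub_zero]
              exact hshift (j - 1) (by omega)
            · simp only [if_neg hi0, if_neg (by omega : j ≠ 0)]
              have : t' + e (j - 1) - (t' + e (i - 1)) = e (j - 1) - e (i - 1) := by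
                ring
              rw [this]
              exact hDd (i - 1) (j - 1) (by omega) (by omega)
  obtain ⟨e, he0, hmono, hDd⟩ := main q.toNat
  -- pigeonhole on residues mod q
  have hcard : (Finset.Ico (0 : ℤ) q).card < (Finset.univ : Finset (Fin (q.toNat + 1))).card := by
    simp [Int.card_Ico]
  have hmaps : ∀ a ∈ (Finset.univ : Finset (Fin (q.toNat + 1))),
      (e a.val % q) ∈ Finset.Ico (0 : ℤ) q := by
    intro a _
    simp [Int.emod_nonneg _ (ne_of_gt hq), Int.emod_lt_of_pos _ hq]
  obtain ⟨a, ha, b, hb, hab, heq⟩ :=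
    Finset.exists_ne_map_eq_of_card_lt_of_maps_to hcard hmaps
  -- WLOG a < b
  wlog hlt : (a : ℕ) < (b : ℕ) generalizing a b with H
  · exact H b hb a ha (Ne.symm hab) heq.symm
      (by rcases Nat.lt_or_ge (a : ℕ) (b : ℕ) with h | h
          · exact absurd h hlt
          · rcases Nat.lt_or_ge (b : ℕ) (a : ℕ) with h2 | h2
            · exact h2
            · exact absurd (Fin.ext (le_antisymm h2 h)) hab)
  have hblt : (b : ℕ) ≤ q.toNat := by omega
  have hdpos : 0 < e b - e a := by
    have := hmono a b hlt hblt; omega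
  have hdvd : q ∣ e b - e a := by
    have : (e b - e a) % q = 0 := by
      rw [Int.sub_emod, heq]; simp
    exact Int.dvd_of_emod_eq_zero this
  refine ⟨(e b - e a) / q, ?_, ?_⟩
  · have hmul : q * ((e b - e a) / q) = e b - e a := Int.mul_ediv_cancel' hdvd
    nlinarith [hmul]
  · intro i hi
    have hmul : q * ((e b - e a) / q) = e b - e a := Int.mul_ediv_cancel' hdvd
    rw [hmul]
    exact (hDd a b (le_of_lt hlt) hblt i hi).symm
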